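/- arXiv:2209.01830 — 5 statements merged into one kernel-verified Lean document; each statement's English description precedes it below -/
import Mathlib

section
/- The sequence 0 ← ℤ ← X_0 ← X_1 ← X_2 ← X_3 ← X_4, where X_0 = ℤ[Q8]{a_0}, X_1 = ℤ[Q8]{b_1, b_2}, X_2 = ℤ[Q8]{c_1, c_2}, X_3 = ℤ[Q8]{e}, X_4 = ℤ[Q8]{a_1}, with augmentation a_0 ↦ 1 and differentials d(b_1) = (i-1)a_0, d(b_2) = (j-1)a_0, d(c_1) = (1+i)b_1 - (1+j)b_2, d(c_2) = (1+ij)b_1 + (i-1)b_2, d(e) = (i-1)c_1 - (ij-1)c_2, d(a_1) = (Σ_{g∈Q8} g)·e, is an exact sequence of ℤ[Q8]-modules. -/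
open QuaternionGroup

noncomputable section

/-- The integral group ring `ℤ[Q₈]`. -/
abbrev Q8Ring : Type := MonoidAlgebra ℤ (QuaternionGroup 2)

/-- The canonical inclusion `Q₈ → ℤ[Q₈]`. -/
def ιQ8 : QuaternionGroup 2 →* Q8Ring := MonoidAlgebra.of ℤ (QuaternionGroup 2)

/-- The element `i ∈ Q₈` inside `ℤ[Q₈]`. -/
def gi : Q8Ring := ιQ8 (a 1)

/-- The element `j ∈ Q₈` inside `ℤ[Q₈]`. -/
def gj : Q8Ring := ιQ8 (xa 0)

/-- Right multiplication by `c`, as a map of left `ℤ[Q₈]`-modules; this sends the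
generator of a free rank one module to `c`. -/
def mr (c : Q8Ring) : Q8Ring →ₗ[Q8Ring] Q8Ring := LinearMap.toSpanSingleton Q8Ring Q8Ring c

/-- `d₀ : X₁ = ℤ[Q₈]{b₁,b₂} → X₀ = ℤ[Q₈]{a₀}`, `b₁ ↦ (i-1)a₀`, `b₂ ↦ (j-1)a₀`. -/
def d0 : (Q8Ring × Q8Ring) →ₗ[Q8Ring] Q8Ring :=
  LinearMap.coprod (mr (gi - 1)) (mr (gj - 1))

/-- `d₁ : X₂ = ℤ[Q₈]{c₁,c₂} → X₁`, `c₁ ↦ (1+i)b₁ - (1+j)b₂`, `c₂ ↦ (1+ij)b₁ + (i-1)b₂`. -/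
def d1 : (Q8Ring × Q8Ring) →ₗ[Q8Ring] (Q8Ring × Q8Ring) :=
  (LinearMap.coprod (mr (1 + gi)) (mr (1 + gi * gj))).prod
    (LinearMap.coprod (mr (-(1 + gj))) (mr (gi - 1)))

/-- `d₂ : X₃ = ℤ[Q₈]{e} → X₂`, `e ↦ (i-1)c₁ - (ij-1)c₂`. -/
def d2 : Q8Ring →ₗ[Q8Ring] (Q8Ring × Q8Ring) :=
  (mr (gi - 1)).prod (mr (1 - gi * gj))

/-- `d₃ : X₄ = ℤ[Q₈]{a₁} → X₃`, `a₁ ↦ (Σ_{g ∈ Q₈} g)·e`. -/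
def d3 : Q8Ring →ₗ[Q8Ring] Q8Ring :=
  mr (∑ g : QuaternionGroup 2, ιQ8 g)

/-- The augmentation `ℤ[Q₈] → ℤ`, `Σ c_g g ↦ Σ c_g`, where `ℤ` carries the trivial
`Q₈`-action. -/
def aug : Q8Ring →ₐ[ℤ] ℤ := MonoidAlgebra.lift ℤ ℤ (QuaternionGroup 2) 1

-- ## Auxiliary infrastructure


lemma aug_ι (g : QuaternionGroup 2) : aug (ιQ8 g) = 1 := by
  simp [aug, ιQ8]

lemma ι_mul (g h : QuaternionGroup 2) : ιQ8 g * ιQ8 h = ιQ8 (g * h) := (map_mul ιQ8 g h).symm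

lemma one_eq : (1 : Q8Ring) = ιQ8 (a 0) := by
  rw [show (a 0 : QuaternionGroup 2) = 1 from rfl, map_one]

lemma sumQ8 : (∑ g : QuaternionGroup 2, ιQ8 g) =
    ιQ8 (a 0) + ιQ8 (a 1) + ιQ8 (a 2) + ιQ8 (a 3) +
    ιQ8 (xa 0) + ιQ8 (xa 1) + ιQ8 (xa 2) + ιQ8 (xa 3) := by
  rw [show (Finset.univ : Finset (QuaternionGroup 2)) =
      ({a 0, a 1, a 2, a 3, xa 0, xa 1, xa 2, xa 3} : Finset _) from by decide]
  simp (config := { decide := true }) [Finset.sum_insert, Finset.mem_insert]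
  abel

/-- A `ℤ`-linear map out of the group ring, defined by its values on the group basis. -/
def mkmap {M : Type} [AddCommGroup M] [Module ℤ M] (f : QuaternionGroup 2 → M) :
    Q8Ring →ₗ[ℤ] M := (Finsupp.lsum ℕ (fun g => LinearMap.toSpanSingleton ℤ M (f g))) ∘ₗ
      (MonoidAlgebra.coeffLinearEquiv ℤ).toLinearMap

lemma mkmap_apply {M : Type} [AddCommGroup M] [Module ℤ M] (f : QuaternionGroup 2 → M)
    (g : QuaternionGroup 2) : mkmap f (ιQ8 g) = f g := by
  rw [mkmap, ιQ8, MonoidAlgebra.of_apply]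
  erw [LinearMap.comp_apply, Finsupp.lsum_single]
  rw [LinearMap.toSpanSingleton_apply]
  exact ‹Module ℤ M›.one_smul (f g)

lemma lhom_ext1 {M : Type} [AddCommGroup M] [Module ℤ M] {f g : Q8Ring →ₗ[ℤ] M}
    (h : ∀ x, f (ιQ8 x) = g (ιQ8 x)) : f = g := by
  refine MonoidAlgebra.lhom_ext' fun x => LinearMap.ext_ring ?_
  simpa [ιQ8, MonoidAlgebra.of_apply] using h x

lemma lhom_ext2 {M : Type} [AddCommGroup M] [Module ℤ M] {f g : Q8Ring × Q8Ring →ₗ[ℤ] M}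
    (h1 : ∀ x, f (ιQ8 x, 0) = g (ιQ8 x, 0)) (h2 : ∀ x, f (0, ιQ8 x) = g (0, ιQ8 x)) : f = g := by
  have h1' : f ∘ₗ LinearMap.inl ℤ Q8Ring Q8Ring = g ∘ₗ LinearMap.inl ℤ Q8Ring Q8Ring :=
    lhom_ext1 fun x => by simpa using h1 x
  have h2' : f ∘ₗ LinearMap.inr ℤ Q8Ring Q8Ring = g ∘ₗ LinearMap.inr ℤ Q8Ring Q8Ring :=
    lhom_ext1 fun x => by simpa using h2 x
  apply LinearMap.ext; rintro ⟨x, y⟩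
  have hxy : (x, y) = ((x, (0:Q8Ring)) + ((0:Q8Ring), y)) := by simp
  rw [hxy, map_add, map_add]
  have e1 := LinearMap.congr_fun h1' x
  have e2 := LinearMap.congr_fun h2' y
  simp only [LinearMap.comp_apply, LinearMap.inl_apply, LinearMap.inr_apply] at e1 e2
  rw [e1, e2]

lemma q8cases (P : QuaternionGroup 2 → Prop) (h0 : P (a 0)) (h1 : P (a 1)) (h2 : P (a 2))
    (h3 : P (a 3)) (h4 : P (xa 0)) (h5 : P (xa 1)) (h6 : P (xa 2)) (h7 : P (xa 3)) :
    ∀ x, P x := by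
  have key : ∀ x : QuaternionGroup 2, x = a 0 ∨ x = a 1 ∨ x = a 2 ∨ x = a 3 ∨ x = xa 0 ∨
      x = xa 1 ∨ x = xa 2 ∨ x = xa 3 := by decide
  intro x
  rcases key x with h|h|h|h|h|h|h|h <;> subst h <;> assumption

def sm1 : ℤ →ₗ[ℤ] Q8Ring := LinearMap.toSpanSingleton ℤ Q8Ring (ιQ8 (a 0))


def sf0 : QuaternionGroup 2 → Q8Ring × Q8Ring := fun g =>
  if g = (a 0) then ((0 : Q8Ring), (0 : Q8Ring)) else
  if g = (a 1) then ((ιQ8 (a 0)), (0 : Q8Ring)) else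
  if g = (a 2) then ((ιQ8 (a 0) + ιQ8 (a 1)), (0 : Q8Ring)) else
  if g = (a 3) then ((ιQ8 (a 0) + ιQ8 (a 1) + ιQ8 (a 2)), (0 : Q8Ring)) else
  if g = (xa 0) then ((0 : Q8Ring), (ιQ8 (a 0))) else
  if g = (xa 1) then ((ιQ8 (xa 0)), (ιQ8 (a 0))) else
  if g = (xa 2) then ((ιQ8 (xa 0) + ιQ8 (xa 1)), (ιQ8 (a 0))) else
  if g = (xa 3) then ((ιQ8 (xa 0) + ιQ8 (xa 1) + ιQ8 (xa 2)), (ιQ8 (a 0))) else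
  0

def sf1a : QuaternionGroup 2 → Q8Ring × Q8Ring := fun g =>
  if g = (a 0) then ((0 : Q8Ring), (0 : Q8Ring)) else
  if g = (a 1) then ((0 : Q8Ring), (0 : Q8Ring)) else
  if g = (a 2) then ((0 : Q8Ring), (0 : Q8Ring)) else
  if g = (a 3) then ((ιQ8 (a 2) - ιQ8 (xa 2)), (ιQ8 (a 0) + ιQ8 (a 1))) else
  if g = (xa 0) then ((0 : Q8Ring), (0 : Q8Ring)) else
  if g = (xa 1) then ((0 : Q8Ring), (0 : Q8Ring)) else
  if g = (xa 2) then ((0 : Q8Ring), (0 : Q8Ring)) else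
  if g = (xa 3) then ((-ιQ8 (a 0) + ιQ8 (xa 0)), (ιQ8 (a 0) + ιQ8 (a 1))) else
  0

def sf1b : QuaternionGroup 2 → Q8Ring × Q8Ring := fun g =>
  if g = (a 0) then ((0 : Q8Ring), (0 : Q8Ring)) else
  if g = (a 1) then ((ιQ8 (a 0) - ιQ8 (xa 0)), (-ιQ8 (a 1))) else
  if g = (a 2) then ((ιQ8 (a 0) - ιQ8 (xa 0)), (0 : Q8Ring)) else
  if g = (a 3) then ((ιQ8 (a 1) - ιQ8 (xa 3)), (ιQ8 (a 0))) else
  if g = (xa 0) then ((-ιQ8 (a 0)), (0 : Q8Ring)) else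
  if g = (xa 1) then ((-ιQ8 (a 0) + ιQ8 (xa 0) - ιQ8 (xa 1)), (ιQ8 (a 1))) else
  if g = (xa 2) then ((-ιQ8 (a 0) + ιQ8 (xa 0) - ιQ8 (xa 2)), (ιQ8 (a 0) + ιQ8 (a 1))) else
  if g = (xa 3) then ((-ιQ8 (a 0) - ιQ8 (a 1) + ιQ8 (xa 0)), (ιQ8 (a 1))) else
  0

def sf2a : QuaternionGroup 2 → Q8Ring := fun g =>
  if g = (a 0) then (0 : Q8Ring) else
  if g = (a 1) then (0 : Q8Ring) else
  if g = (a 2) then (0 : Q8Ring) else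
  if g = (a 3) then (-ιQ8 (a 1) - ιQ8 (a 3) - ιQ8 (xa 0) - ιQ8 (xa 2)) else
  if g = (xa 0) then (0 : Q8Ring) else
  if g = (xa 1) then (0 : Q8Ring) else
  if g = (xa 2) then (0 : Q8Ring) else
  if g = (xa 3) then (0 : Q8Ring) else
  0

def sf2b : QuaternionGroup 2 → Q8Ring := fun g =>
  if g = (a 0) then (0 : Q8Ring) else
  if g = (a 1) then (0 : Q8Ring) else
  if g = (a 2) then (ιQ8 (a 1) + ιQ8 (a 2) + ιQ8 (a 3) + ιQ8 (xa 0) + ιQ8 (xa 1) + ιQ8 (xa 2)) else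
  if g = (a 3) then (-ιQ8 (a 1) - ιQ8 (xa 2)) else
  if g = (xa 0) then (ιQ8 (xa 0)) else
  if g = (xa 1) then (ιQ8 (xa 1)) else
  if g = (xa 2) then (-ιQ8 (a 1)) else
  if g = (xa 3) then (-ιQ8 (a 0)) else
  0

def sf3 : QuaternionGroup 2 → Q8Ring := fun g =>
  if g = (a 0) then (0 : Q8Ring) else
  if g = (a 1) then (0 : Q8Ring) else
  if g = (a 2) then (0 : Q8Ring) else
  if g = (a 3) then (0 : Q8Ring) else
  if g = (xa 0) then (0 : Q8Ring) else
  if g = (xa 1) then (0 : Q8Ring) else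
  if g = (xa 2) then (0 : Q8Ring) else
  if g = (xa 3) then (ιQ8 (a 0)) else
  0

lemma mt0_0 : ((a 0) * (a 0) : QuaternionGroup 2) = (a 0) := by decide
lemma mt0_1 : ((a 0) * (a 1) : QuaternionGroup 2) = (a 1) := by decide
lemma mt0_2 : ((a 0) * (a 2) : QuaternionGroup 2) = (a 2) := by decide
lemma mt0_3 : ((a 0) * (a 3) : QuaternionGroup 2) = (a 3) := by decide
lemma mt0_4 : ((a 0) * (xa 0) : QuaternionGroup 2) = (xa 0) := by decide
lemma mt0_5 : ((a 0) * (xa 1) : QuaternionGroup 2) = (xa 1) := by decide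
lemma mt0_6 : ((a 0) * (xa 2) : QuaternionGroup 2) = (xa 2) := by decide
lemma mt0_7 : ((a 0) * (xa 3) : QuaternionGroup 2) = (xa 3) := by decide
lemma mt1_0 : ((a 1) * (a 0) : QuaternionGroup 2) = (a 1) := by decide
lemma mt1_1 : ((a 1) * (a 1) : QuaternionGroup 2) = (a 2) := by decide
lemma mt1_2 : ((a 1) * (a 2) : QuaternionGroup 2) = (a 3) := by decide
lemma mt1_3 : ((a 1) * (a 3) : QuaternionGroup 2) = (a 0) := by decide
lemma mt1_4 : ((a 1) * (xa 0) : QuaternionGroup 2) = (xa 3) := by decide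
lemma mt1_5 : ((a 1) * (xa 1) : QuaternionGroup 2) = (xa 0) := by decide
lemma mt1_6 : ((a 1) * (xa 2) : QuaternionGroup 2) = (xa 1) := by decide
lemma mt1_7 : ((a 1) * (xa 3) : QuaternionGroup 2) = (xa 2) := by decide
lemma mt2_0 : ((a 2) * (a 0) : QuaternionGroup 2) = (a 2) := by decide
lemma mt2_1 : ((a 2) * (a 1) : QuaternionGroup 2) = (a 3) := by decide
lemma mt2_2 : ((a 2) * (a 2) : QuaternionGroup 2) = (a 0) := by decide
lemma mt2_3 : ((a 2) * (a 3) : QuaternionGroup 2) = (a 1) := by decide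
lemma mt2_4 : ((a 2) * (xa 0) : QuaternionGroup 2) = (xa 2) := by decide
lemma mt2_5 : ((a 2) * (xa 1) : QuaternionGroup 2) = (xa 3) := by decide
lemma mt2_6 : ((a 2) * (xa 2) : QuaternionGroup 2) = (xa 0) := by decide
lemma mt2_7 : ((a 2) * (xa 3) : QuaternionGroup 2) = (xa 1) := by decide
lemma mt3_0 : ((a 3) * (a 0) : QuaternionGroup 2) = (a 3) := by decide
lemma mt3_1 : ((a 3) * (a 1) : QuaternionGroup 2) = (a 0) := by decide
lemma mt3_2 : ((a 3) * (a 2) : QuaternionGroup 2) = (a 1) := by decide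
lemma mt3_3 : ((a 3) * (a 3) : QuaternionGroup 2) = (a 2) := by decide
lemma mt3_4 : ((a 3) * (xa 0) : QuaternionGroup 2) = (xa 1) := by decide
lemma mt3_5 : ((a 3) * (xa 1) : QuaternionGroup 2) = (xa 2) := by decide
lemma mt3_6 : ((a 3) * (xa 2) : QuaternionGroup 2) = (xa 3) := by decide
lemma mt3_7 : ((a 3) * (xa 3) : QuaternionGroup 2) = (xa 0) := by decide
lemma mt4_0 : ((xa 0) * (a 0) : QuaternionGroup 2) = (xa 0) := by decide
lemma mt4_1 : ((xa 0) * (a 1) : QuaternionGroup 2) = (xa 1) := by decide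
lemma mt4_2 : ((xa 0) * (a 2) : QuaternionGroup 2) = (xa 2) := by decide
lemma mt4_3 : ((xa 0) * (a 3) : QuaternionGroup 2) = (xa 3) := by decide
lemma mt4_4 : ((xa 0) * (xa 0) : QuaternionGroup 2) = (a 2) := by decide
lemma mt4_5 : ((xa 0) * (xa 1) : QuaternionGroup 2) = (a 3) := by decide
lemma mt4_6 : ((xa 0) * (xa 2) : QuaternionGroup 2) = (a 0) := by decide
lemma mt4_7 : ((xa 0) * (xa 3) : QuaternionGroup 2) = (a 1) := by decide
lemma mt5_0 : ((xa 1) * (a 0) : QuaternionGroup 2) = (xa 1) := by decide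
lemma mt5_1 : ((xa 1) * (a 1) : QuaternionGroup 2) = (xa 2) := by decide
lemma mt5_2 : ((xa 1) * (a 2) : QuaternionGroup 2) = (xa 3) := by decide
lemma mt5_3 : ((xa 1) * (a 3) : QuaternionGroup 2) = (xa 0) := by decide
lemma mt5_4 : ((xa 1) * (xa 0) : QuaternionGroup 2) = (a 1) := by decide
lemma mt5_5 : ((xa 1) * (xa 1) : QuaternionGroup 2) = (a 2) := by decide
lemma mt5_6 : ((xa 1) * (xa 2) : QuaternionGroup 2) = (a 3) := by decide
lemma mt5_7 : ((xa 1) * (xa 3) : QuaternionGroup 2) = (a 0) := by decide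
lemma mt6_0 : ((xa 2) * (a 0) : QuaternionGroup 2) = (xa 2) := by decide
lemma mt6_1 : ((xa 2) * (a 1) : QuaternionGroup 2) = (xa 3) := by decide
lemma mt6_2 : ((xa 2) * (a 2) : QuaternionGroup 2) = (xa 0) := by decide
lemma mt6_3 : ((xa 2) * (a 3) : QuaternionGroup 2) = (xa 1) := by decide
lemma mt6_4 : ((xa 2) * (xa 0) : QuaternionGroup 2) = (a 0) := by decide
lemma mt6_5 : ((xa 2) * (xa 1) : QuaternionGroup 2) = (a 1) := by decide
lemma mt6_6 : ((xa 2) * (xa 2) : QuaternionGroup 2) = (a 2) := by decide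
lemma mt6_7 : ((xa 2) * (xa 3) : QuaternionGroup 2) = (a 3) := by decide
lemma mt7_0 : ((xa 3) * (a 0) : QuaternionGroup 2) = (xa 3) := by decide
lemma mt7_1 : ((xa 3) * (a 1) : QuaternionGroup 2) = (xa 0) := by decide
lemma mt7_2 : ((xa 3) * (a 2) : QuaternionGroup 2) = (xa 1) := by decide
lemma mt7_3 : ((xa 3) * (a 3) : QuaternionGroup 2) = (xa 2) := by decide
lemma mt7_4 : ((xa 3) * (xa 0) : QuaternionGroup 2) = (a 3) := by decide
lemma mt7_5 : ((xa 3) * (xa 1) : QuaternionGroup 2) = (a 0) := by decide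
lemma mt7_6 : ((xa 3) * (xa 2) : QuaternionGroup 2) = (a 1) := by decide
lemma mt7_7 : ((xa 3) * (xa 3) : QuaternionGroup 2) = (a 2) := by decide

set_option maxHeartbeats 2000000

def s0 : Q8Ring →ₗ[ℤ] Q8Ring × Q8Ring := mkmap sf0
def s1 : Q8Ring × Q8Ring →ₗ[ℤ] Q8Ring × Q8Ring := (mkmap sf1a).coprod (mkmap sf1b)
def s2 : Q8Ring × Q8Ring →ₗ[ℤ] Q8Ring := (mkmap sf2a).coprod (mkmap sf2b)
def s3 : Q8Ring →ₗ[ℤ] Q8Ring := mkmap sf3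

lemma K1 : (d0.restrictScalars ℤ) ∘ₗ s0 + sm1 ∘ₗ aug.toLinearMap = LinearMap.id := by
  apply lhom_ext1
  refine q8cases _ ?_ ?_ ?_ ?_ ?_ ?_ ?_ ?_ <;>
  · (simp (config := { decide := true }) only [d0, d1, d2, d3, mr, gi, gj, sm1, s0, s1, s2, s3, sf0, sf1a, sf1b, sf2a, sf2b, sf3,
    mkmap_apply, if_true, if_false, reduceIte, LinearMap.add_apply, LinearMap.comp_apply, LinearMap.coprod_apply,
    LinearMap.prod_apply, Pi.prod, Function.prod_apply, LinearMap.coe_restrictScalars, LinearMap.id_coe, id_eq,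
    LinearMap.toSpanSingleton_apply, LinearMap.zero_apply, smul_eq_mul,
    map_add, map_sub, map_neg, map_zero, mul_add, add_mul, mul_sub, sub_mul, neg_mul, mul_neg,
    zero_mul, mul_zero, add_zero, zero_add, sub_zero, zero_sub, neg_zero, neg_neg,
    ι_mul, one_eq, sumQ8, aug_ι, AlgHom.toLinearMap_apply, one_smul,
    Prod.mk_add_mk, Prod.mk_sub_mk, Prod.neg_mk, Prod.mk.injEq, Prod.mk_eq_zero,
    mt0_0, mt0_1, mt0_2, mt0_3, mt0_4, mt0_5, mt0_6, mt0_7, mt1_0, mt1_1, mt1_2, mt1_3, mt1_4, mt1_5, mt1_6, mt1_7, mt2_0, mt2_1, mt2_2, mt2_3, mt2_4, mt2_5, mt2_6, mt2_7, mt3_0, mt3_1, mt3_2, mt3_3, mt3_4, mt3_5, mt3_6, mt3_7, mt4_0, mt4_1, mt4_2, mt4_3, mt4_4, mt4_5, mt4_6, mt4_7, mt5_0, mt5_1, mt5_2, mt5_3, mt5_4, mt5_5, mt5_6, mt5_7, mt6_0, mt6_1, mt6_2, mt6_3, mt6_4, mt6_5, mt6_6, mt6_7, mt7_0, mt7_1,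 mt7_2, mt7_3, mt7_4, mt7_5, mt7_6, mt7_7]) <;> (try constructor) <;> (first | trivial | abel)

lemma K2 : (d1.restrictScalars ℤ) ∘ₗ s1 + s0 ∘ₗ (d0.restrictScalars ℤ) = LinearMap.id := by
  apply lhom_ext2 <;> refine q8cases _ ?_ ?_ ?_ ?_ ?_ ?_ ?_ ?_ <;>
  · (simp (config := { decide := true }) only [d0, d1, d2, d3, mr, gi, gj, sm1, s0, s1, s2, s3, sf0, sf1a, sf1b, sf2a, sf2b, sf3,
    mkmap_apply, if_true, if_false, reduceIte, LinearMap.add_apply, LinearMap.comp_apply, LinearMap.coprod_apply,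
    LinearMap.prod_apply, Pi.prod, Function.prod_apply, LinearMap.coe_restrictScalars, LinearMap.id_coe, id_eq,
    LinearMap.toSpanSingleton_apply, LinearMap.zero_apply, smul_eq_mul,
    map_add, map_sub, map_neg, map_zero, mul_add, add_mul, mul_sub, sub_mul, neg_mul, mul_neg,
    zero_mul, mul_zero, add_zero, zero_add, sub_zero, zero_sub, neg_zero, neg_neg,
    ι_mul, one_eq, sumQ8, aug_ι, AlgHom.toLinearMap_apply, one_smul,
    Prod.mk_add_mk, Prod.mk_sub_mk, Prod.neg_mk, Prod.mk.injEq, Prod.mk_eq_zero,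
    mt0_0, mt0_1, mt0_2, mt0_3, mt0_4, mt0_5, mt0_6, mt0_7, mt1_0, mt1_1, mt1_2, mt1_3, mt1_4, mt1_5, mt1_6, mt1_7, mt2_0, mt2_1, mt2_2, mt2_3, mt2_4, mt2_5, mt2_6, mt2_7, mt3_0, mt3_1, mt3_2, mt3_3, mt3_4, mt3_5, mt3_6, mt3_7, mt4_0, mt4_1, mt4_2, mt4_3, mt4_4, mt4_5, mt4_6, mt4_7, mt5_0, mt5_1, mt5_2, mt5_3, mt5_4, mt5_5, mt5_6, mt5_7, mt6_0, mt6_1, mt6_2, mt6_3, mt6_4, mt6_5, mt6_6, mt6_7, mt7_0, mt7_1, mt7_2, mt7_3, mt7_4, mt7_5, mt7_6, mt7_7]) <;> (try constructor) <;> (first | trivial | abel)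

lemma K3 : (d2.restrictScalars ℤ) ∘ₗ s2 + s1 ∘ₗ (d1.restrictScalars ℤ) = LinearMap.id := by
  apply lhom_ext2 <;> refine q8cases _ ?_ ?_ ?_ ?_ ?_ ?_ ?_ ?_ <;>
  · (simp (config := { decide := true }) only [d0, d1, d2, d3, mr, gi, gj, sm1, s0, s1, s2, s3, sf0, sf1a, sf1b, sf2a, sf2b, sf3,
    mkmap_apply, if_true, if_false, reduceIte, LinearMap.add_apply, LinearMap.comp_apply, LinearMap.coprod_apply,
    LinearMap.prod_apply, Pi.prod, Function.prod_apply, LinearMap.coe_restrictScalars, LinearMap.id_coe, id_eq,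
    LinearMap.toSpanSingleton_apply, LinearMap.zero_apply, smul_eq_mul,
    map_add, map_sub, map_neg, map_zero, mul_add, add_mul, mul_sub, sub_mul, neg_mul, mul_neg,
    zero_mul, mul_zero, add_zero, zero_add, sub_zero, zero_sub, neg_zero, neg_neg,
    ι_mul, one_eq, sumQ8, aug_ι, AlgHom.toLinearMap_apply, one_smul,
    Prod.mk_add_mk, Prod.mk_sub_mk, Prod.neg_mk, Prod.mk.injEq, Prod.mk_eq_zero,
    mt0_0, mt0_1, mt0_2, mt0_3, mt0_4, mt0_5, mt0_6, mt0_7, mt1_0, mt1_1, mt1_2, mt1_3, mt1_4, mt1_5, mt1_6, mt1_7, mt2_0, mt2_1, mt2_2, mt2_3, mt2_4, mt2_5, mt2_6, mt2_7, mt3_0, mt3_1, mt3_2, mt3_3, mt3_4, mt3_5, mt3_6, mt3_7, mt4_0, mt4_1, mt4_2, mt4_3, mt4_4, mt4_5, mt4_6, mt4_7, mt5_0, mt5_1, mt5_2, mt5_3, mt5_4, mt5_5, mt5_6, mt5_7, mt6_0, mt6_1, mt6_2, mt6_3, mt6_4, mt6_5, mt6_6, mt6_7, mt7_0, mt7_1,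 mt7_2, mt7_3, mt7_4, mt7_5, mt7_6, mt7_7]) <;> (try constructor) <;> (first | trivial | abel)

lemma K4 : (d3.restrictScalars ℤ) ∘ₗ s3 + s2 ∘ₗ (d2.restrictScalars ℤ) = LinearMap.id := by
  apply lhom_ext1
  refine q8cases _ ?_ ?_ ?_ ?_ ?_ ?_ ?_ ?_ <;>
  · (simp (config := { decide := true }) only [d0, d1, d2, d3, mr, gi, gj, sm1, s0, s1, s2, s3, sf0, sf1a, sf1b, sf2a, sf2b, sf3,
    mkmap_apply, if_true, if_false, reduceIte, LinearMap.add_apply, LinearMap.comp_apply, LinearMap.coprod_apply,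
    LinearMap.prod_apply, Pi.prod, Function.prod_apply, LinearMap.coe_restrictScalars, LinearMap.id_coe, id_eq,
    LinearMap.toSpanSingleton_apply, LinearMap.zero_apply, smul_eq_mul,
    map_add, map_sub, map_neg, map_zero, mul_add, add_mul, mul_sub, sub_mul, neg_mul, mul_neg,
    zero_mul, mul_zero, add_zero, zero_add, sub_zero, zero_sub, neg_zero, neg_neg,
    ι_mul, one_eq, sumQ8, aug_ι, AlgHom.toLinearMap_apply, one_smul,
    Prod.mk_add_mk, Prod.mk_sub_mk, Prod.neg_mk, Prod.mk.injEq, Prod.mk_eq_zero,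
    mt0_0, mt0_1, mt0_2, mt0_3, mt0_4, mt0_5, mt0_6, mt0_7, mt1_0, mt1_1, mt1_2, mt1_3, mt1_4, mt1_5, mt1_6, mt1_7, mt2_0, mt2_1, mt2_2, mt2_3, mt2_4, mt2_5, mt2_6, mt2_7, mt3_0, mt3_1, mt3_2, mt3_3, mt3_4, mt3_5, mt3_6, mt3_7, mt4_0, mt4_1, mt4_2, mt4_3, mt4_4, mt4_5, mt4_6, mt4_7, mt5_0, mt5_1, mt5_2, mt5_3, mt5_4, mt5_5, mt5_6, mt5_7, mt6_0, mt6_1, mt6_2, mt6_3, mt6_4, mt6_5, mt6_6, mt6_7, mt7_0, mt7_1, mt7_2, mt7_3, mt7_4, mt7_5, mt7_6, mt7_7]) <;> (try constructor) <;> (first | trivial | abel)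

lemma Z0 : aug.toLinearMap ∘ₗ (d0.restrictScalars ℤ) = 0 := by
  apply lhom_ext2 <;> refine q8cases _ ?_ ?_ ?_ ?_ ?_ ?_ ?_ ?_ <;>
  · (simp (config := { decide := true }) only [d0, d1, d2, d3, mr, gi, gj, sm1, s0, s1, s2, s3, sf0, sf1a, sf1b, sf2a, sf2b, sf3,
    mkmap_apply, if_true, if_false, reduceIte, LinearMap.add_apply, LinearMap.comp_apply, LinearMap.coprod_apply,
    LinearMap.prod_apply, Pi.prod, Function.prod_apply, LinearMap.coe_restrictScalars, LinearMap.id_coe, id_eq,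
    LinearMap.toSpanSingleton_apply, LinearMap.zero_apply, smul_eq_mul,
    map_add, map_sub, map_neg, map_zero, mul_add, add_mul, mul_sub, sub_mul, neg_mul, mul_neg,
    zero_mul, mul_zero, add_zero, zero_add, sub_zero, zero_sub, neg_zero, neg_neg,
    ι_mul, one_eq, sumQ8, aug_ι, AlgHom.toLinearMap_apply, one_smul,
    Prod.mk_add_mk, Prod.mk_sub_mk, Prod.neg_mk, Prod.mk.injEq, Prod.mk_eq_zero,
    mt0_0, mt0_1, mt0_2, mt0_3, mt0_4, mt0_5, mt0_6, mt0_7, mt1_0, mt1_1, mt1_2, mt1_3, mt1_4, mt1_5, mt1_6, mt1_7, mt2_0, mt2_1, mt2_2, mt2_3, mt2_4, mt2_5, mt2_6, mt2_7, mt3_0, mt3_1, mt3_2, mt3_3, mt3_4, mt3_5, mt3_6, mt3_7, mt4_0, mt4_1, mt4_2, mt4_3, mt4_4, mt4_5, mt4_6, mt4_7, mt5_0, mt5_1, mt5_2, mt5_3, mt5_4, mt5_5, mt5_6, mt5_7, mt6_0, mt6_1, mt6_2, mt6_3, mt6_4, mt6_5, mt6_6, mt6_7, mt7_0, mt7_1,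 mt7_2, mt7_3, mt7_4, mt7_5, mt7_6, mt7_7]) <;> (try constructor) <;> (first | trivial | abel)

lemma Z1 : (d0.restrictScalars ℤ) ∘ₗ (d1.restrictScalars ℤ) = 0 := by
  apply lhom_ext2 <;> refine q8cases _ ?_ ?_ ?_ ?_ ?_ ?_ ?_ ?_ <;>
  · (simp (config := { decide := true }) only [d0, d1, d2, d3, mr, gi, gj, sm1, s0, s1, s2, s3, sf0, sf1a, sf1b, sf2a, sf2b, sf3,
    mkmap_apply, if_true, if_false, reduceIte, LinearMap.add_apply, LinearMap.comp_apply, LinearMap.coprod_apply,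
    LinearMap.prod_apply, Pi.prod, Function.prod_apply, LinearMap.coe_restrictScalars, LinearMap.id_coe, id_eq,
    LinearMap.toSpanSingleton_apply, LinearMap.zero_apply, smul_eq_mul,
    map_add, map_sub, map_neg, map_zero, mul_add, add_mul, mul_sub, sub_mul, neg_mul, mul_neg,
    zero_mul, mul_zero, add_zero, zero_add, sub_zero, zero_sub, neg_zero, neg_neg,
    ι_mul, one_eq, sumQ8, aug_ι, AlgHom.toLinearMap_apply, one_smul,
    Prod.mk_add_mk, Prod.mk_sub_mk, Prod.neg_mk, Prod.mk.injEq, Prod.mk_eq_zero,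
    mt0_0, mt0_1, mt0_2, mt0_3, mt0_4, mt0_5, mt0_6, mt0_7, mt1_0, mt1_1, mt1_2, mt1_3, mt1_4, mt1_5, mt1_6, mt1_7, mt2_0, mt2_1, mt2_2, mt2_3, mt2_4, mt2_5, mt2_6, mt2_7, mt3_0, mt3_1, mt3_2, mt3_3, mt3_4, mt3_5, mt3_6, mt3_7, mt4_0, mt4_1, mt4_2, mt4_3, mt4_4, mt4_5, mt4_6, mt4_7, mt5_0, mt5_1, mt5_2, mt5_3, mt5_4, mt5_5, mt5_6, mt5_7, mt6_0, mt6_1, mt6_2, mt6_3, mt6_4, mt6_5, mt6_6, mt6_7, mt7_0, mt7_1, mt7_2, mt7_3, mt7_4, mt7_5, mt7_6, mt7_7]) <;> (try constructor) <;> (first | trivial | abel)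

lemma Z2 : (d1.restrictScalars ℤ) ∘ₗ (d2.restrictScalars ℤ) = 0 := by
  apply lhom_ext1
  refine q8cases _ ?_ ?_ ?_ ?_ ?_ ?_ ?_ ?_ <;>
  · (simp (config := { decide := true }) only [d0, d1, d2, d3, mr, gi, gj, sm1, s0, s1, s2, s3, sf0, sf1a, sf1b, sf2a, sf2b, sf3,
    mkmap_apply, if_true, if_false, reduceIte, LinearMap.add_apply, LinearMap.comp_apply, LinearMap.coprod_apply,
    LinearMap.prod_apply, Pi.prod, Function.prod_apply, LinearMap.coe_restrictScalars, LinearMap.id_coe, id_eq,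
    LinearMap.toSpanSingleton_apply, LinearMap.zero_apply, smul_eq_mul,
    map_add, map_sub, map_neg, map_zero, mul_add, add_mul, mul_sub, sub_mul, neg_mul, mul_neg,
    zero_mul, mul_zero, add_zero, zero_add, sub_zero, zero_sub, neg_zero, neg_neg,
    ι_mul, one_eq, sumQ8, aug_ι, AlgHom.toLinearMap_apply, one_smul,
    Prod.mk_add_mk, Prod.mk_sub_mk, Prod.neg_mk, Prod.mk.injEq, Prod.mk_eq_zero,
    mt0_0, mt0_1, mt0_2, mt0_3, mt0_4, mt0_5, mt0_6, mt0_7, mt1_0, mt1_1, mt1_2, mt1_3, mt1_4, mt1_5, mt1_6, mt1_7, mt2_0, mt2_1, mt2_2, mt2_3, mt2_4, mt2_5, mt2_6, mt2_7, mt3_0, mt3_1, mt3_2, mt3_3, mt3_4, mt3_5, mt3_6, mt3_7, mt4_0, mt4_1, mt4_2, mt4_3, mt4_4, mt4_5, mt4_6, mt4_7, mt5_0, mt5_1, mt5_2, mt5_3, mt5_4, mt5_5, mt5_6, mt5_7, mt6_0, mt6_1, mt6_2, mt6_3, mt6_4, mt6_5, mt6_6, mt6_7, mt7_0, mt7_1,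 mt7_2, mt7_3, mt7_4, mt7_5, mt7_6, mt7_7]) <;> (try constructor) <;> (first | trivial | abel)

lemma Z3 : (d2.restrictScalars ℤ) ∘ₗ (d3.restrictScalars ℤ) = 0 := by
  apply lhom_ext1
  refine q8cases _ ?_ ?_ ?_ ?_ ?_ ?_ ?_ ?_ <;>
  · (simp (config := { decide := true }) only [d0, d1, d2, d3, mr, gi, gj, sm1, s0, s1, s2, s3, sf0, sf1a, sf1b, sf2a, sf2b, sf3,
    mkmap_apply, if_true, if_false, reduceIte, LinearMap.add_apply, LinearMap.comp_apply, LinearMap.coprod_apply,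
    LinearMap.prod_apply, Pi.prod, Function.prod_apply, LinearMap.coe_restrictScalars, LinearMap.id_coe, id_eq,
    LinearMap.toSpanSingleton_apply, LinearMap.zero_apply, smul_eq_mul,
    map_add, map_sub, map_neg, map_zero, mul_add, add_mul, mul_sub, sub_mul, neg_mul, mul_neg,
    zero_mul, mul_zero, add_zero, zero_add, sub_zero, zero_sub, neg_zero, neg_neg,
    ι_mul, one_eq, sumQ8, aug_ι, AlgHom.toLinearMap_apply, one_smul,
    Prod.mk_add_mk, Prod.mk_sub_mk, Prod.neg_mk, Prod.mk.injEq, Prod.mk_eq_zero,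
    mt0_0, mt0_1, mt0_2, mt0_3, mt0_4, mt0_5, mt0_6, mt0_7, mt1_0, mt1_1, mt1_2, mt1_3, mt1_4, mt1_5, mt1_6, mt1_7, mt2_0, mt2_1, mt2_2, mt2_3, mt2_4, mt2_5, mt2_6, mt2_7, mt3_0, mt3_1, mt3_2, mt3_3, mt3_4, mt3_5, mt3_6, mt3_7, mt4_0, mt4_1, mt4_2, mt4_3, mt4_4, mt4_5, mt4_6, mt4_7, mt5_0, mt5_1, mt5_2, mt5_3, mt5_4, mt5_5, mt5_6, mt5_7, mt6_0, mt6_1, mt6_2, mt6_3, mt6_4, mt6_5, mt6_6, mt6_7, mt7_0, mt7_1, mt7_2, mt7_3, mt7_4, mt7_5, mt7_6, mt7_7]) <;> (try constructor) <;> (first | trivial | abel)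

/-- The sequence `0 ← ℤ ← X₀ ← X₁ ← X₂ ← X₃ ← X₄` of (free) `ℤ[Q₈]`-modules, with the
differentials `d₀, d₁, d₂, d₃` and the augmentation described above, is exact. -/
theorem q8_resolution_exact :
    Function.Surjective aug ∧
    (∀ x : Q8Ring, aug x = 0 ↔ x ∈ LinearMap.range d0) ∧
    (∀ x : Q8Ring × Q8Ring, d0 x = 0 ↔ x ∈ LinearMap.range d1) ∧
    (∀ x : Q8Ring × Q8Ring, d1 x = 0 ↔ x ∈ LinearMap.range d2) ∧
    (∀ x : Q8Ring, d2 x = 0 ↔ x ∈ LinearMap.range d3) := by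
  refine ⟨?_, ?_, ?_, ?_, ?_⟩
  · intro n
    exact ⟨algebraMap ℤ Q8Ring n, by simpa using aug.commutes n⟩
  · intro x
    constructor
    · intro h
      refine ⟨s0 x, ?_⟩
      have hx := LinearMap.congr_fun K1 x
      simp only [LinearMap.add_apply, LinearMap.comp_apply, LinearMap.coe_restrictScalars,
        LinearMap.id_coe, id_eq, AlgHom.toLinearMap_apply, h, map_zero, add_zero] at hx
      exact hx
    · rintro ⟨y, rfl⟩
      have hy := LinearMap.congr_fun Z0 y
      simpa using hy
  · intro x
    constructor
    · intro h
      refine ⟨s1 x, ?_⟩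
      have hx := LinearMap.congr_fun K2 x
      simp only [LinearMap.add_apply, LinearMap.comp_apply, LinearMap.coe_restrictScalars,
        LinearMap.id_coe, id_eq, h, map_zero, add_zero] at hx
      exact hx
    · rintro ⟨y, rfl⟩
      have hy := LinearMap.congr_fun Z1 y
      simpa using hy
  · intro x
    constructor
    · intro h
      refine ⟨s2 x, ?_⟩
      have hx := LinearMap.congr_fun K3 x
      simp only [LinearMap.add_apply, LinearMap.comp_apply, LinearMap.coe_restrictScalars,
        LinearMap.id_coe, id_eq, h, map_zero, add_zero] at hx
      exact hx
    · rintro ⟨y, rfl⟩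
      have hy := LinearMap.congr_fun Z2 y
      simpa using hy
  · intro x
    constructor
    · intro h
      refine ⟨s3 x, ?_⟩
      have hx := LinearMap.congr_fun K4 x
      simp only [LinearMap.add_apply, LinearMap.comp_apply, LinearMap.coe_restrictScalars,
        LinearMap.id_coe, id_eq, h, map_zero, add_zero] at hx
      exact hx
    · rintro ⟨y, rfl⟩
      have hy := LinearMap.congr_fun Z3 y
      simpa using hy

end
end

section
/- Let W be the ring of Witt vectors W(𝔽_4), viewed as containing a primitive cube root of unity ζ, and let Q8 act on the polynomial ring W[v_1, u^{-1}] by the formulas: i_*(u^{-1}) = (v_1 - u^{-1})/(ζ² - ζ), i_*(v_1) = (v_1 + 2u^{-1})/(ζ² - ζ), j_*(u^{-1}) = (ζv_1 - u^{-1})/(ζ² - ζ), j_*(v_1) = (v_1 + 2ζ²u^{-1})/(ζ² - ζ). Then the element D = ∏_{g ∈ Q8/C_2} g_*(u^{-1}) = u^{-1} · i_*(u^{-1}) · j_*(u^{-1}) · k_*(u^{-1}) is Q8-invariant. -/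
noncomputable section

/-- The ring of 2-typical Witt vectors `𝕎(𝔽₄)`. -/
abbrev W4 : Type := WittVector 2 (GaloisField 2 2)

/-- The ring `W(𝔽₄)[v₁, u⁻¹]`, a polynomial ring in two variables over `𝕎(𝔽₄)`:
`X 0` is `u⁻¹` and `X 1` is `v₁`. -/
abbrev R9 : Type := MvPolynomial (Fin 2) W4

open MvPolynomial

/-- Let `ζ ∈ 𝕎(𝔽₄)` be a primitive third root of unity and `ε` the inverse of `ζ² - ζ`,
and let `Q₈` act `W`-linearly on `W(𝔽₄)[v₁, u⁻¹]` via the ring maps `iH`, `jH`, `kH`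
(for the elements `i`, `j`, `k = ij`) determined by
`i(u⁻¹) = (v₁ - u⁻¹)/(ζ²-ζ)`, `i(v₁) = (v₁ + 2u⁻¹)/(ζ²-ζ)`,
`j(u⁻¹) = (ζv₁ - u⁻¹)/(ζ²-ζ)`, `j(v₁) = (v₁ + 2ζ²u⁻¹)/(ζ²-ζ)`,
`k(u⁻¹) = (ζ²v₁ - u⁻¹)/(ζ²-ζ)`, `k(v₁) = (v₁ + 2ζu⁻¹)/(ζ²-ζ)`.
Then `D = u⁻¹ · i(u⁻¹) · j(u⁻¹) · k(u⁻¹)` is `Q₈`-invariant. -/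
theorem D_is_Q8_invariant
    (ζ ε : W4) (hζ : ζ ^ 2 + ζ + 1 = 0) (hε : (ζ ^ 2 - ζ) * ε = 1)
    (iH jH kH : R9 →ₐ[W4] R9)
    (hi0 : iH (X 0) = C ε * (X 1 - X 0))
    (hi1 : iH (X 1) = C ε * (X 1 + 2 * X 0))
    (hj0 : jH (X 0) = C ε * (C ζ * X 1 - X 0))
    (hj1 : jH (X 1) = C ε * (X 1 + 2 * C (ζ ^ 2) * X 0))
    (hk0 : kH (X 0) = C ε * (C (ζ ^ 2) * X 1 - X 0))
    (hk1 : kH (X 1) = C ε * (X 1 + 2 * C ζ * X 0)) :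
    iH (X 0 * iH (X 0) * jH (X 0) * kH (X 0)) = X 0 * iH (X 0) * jH (X 0) * kH (X 0) ∧
    jH (X 0 * iH (X 0) * jH (X 0) * kH (X 0)) = X 0 * iH (X 0) * jH (X 0) * kH (X 0) ∧
    kH (X 0 * iH (X 0) * jH (X 0) * kH (X 0)) = X 0 * iH (X 0) * jH (X 0) * kH (X 0) := by
  have hC : ∀ (f : R9 →ₐ[W4] R9) (a : W4), f (C a) = C a := by
    intro f a
    rw [← MvPolynomial.algebraMap_eq]
    exact f.commutes a
  have hpow : (C (ζ ^ 2) : R9) = C ζ ^ 2 := map_pow C ζ 2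
  rw [hpow] at hj1 hk0
  -- scalar relations, transported to `R9`
  have hζ' : (C ζ : R9) ^ 2 + C ζ + 1 = 0 := by
    have := congrArg (C : W4 → R9) hζ
    simpa using this
  have hε' : ((C ζ : R9) ^ 2 - C ζ) * C ε = 1 := by
    have := congrArg (C : W4 → R9) hε
    simpa using this
  have s3e' : (3 : R9) * C ε ^ 2 = -1 := by
    linear_combination (C ε ^ 2 * (C ζ ^ 2 - 3 * C ζ + 3)) * hζ' -
      ((C ζ ^ 2 - C ζ) * C ε + 1) * hε'
  have m1' : (C ε : R9) * (2 * C ζ + 1) = -1 := by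
    linear_combination C ε * hζ' - hε'
  have m2' : (C ε : R9) * (2 * C ζ ^ 2 + 1) = 1 := by
    linear_combination C ε * hζ' + hε'
  have m3' : (C ε : R9) * (C ζ - 1) = C ζ ^ 2 := by
    linear_combination (-(C ε * (C ζ - 1) ^ 2)) * hζ' + C ζ ^ 2 * hε'
  have s4' : (C ε : R9) * (C ζ ^ 2 - 1) = -C ζ := by
    linear_combination (C ε * (C ζ - 1)) * hζ' - C ζ * hε'
  -- action of i, j, k on the four linear factors
  have A1 : iH (C ε * (X 1 - X 0)) = -(X 0 : R9) := by
    simp only [map_mul, map_sub, map_add, map_pow, hi0, hi1, hC]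
    linear_combination (X 0 : R9) * s3e'
  have A2 : iH (C ε * (C ζ * X 1 - X 0)) = C ε * (C ζ ^ 2 * X 1 - X 0) := by
    simp only [map_mul, map_sub, map_add, map_pow, hi0, hi1, hC]
    linear_combination (C ε * X 1) * m3' + (C ε * X 0) * m1'
  have A3 : iH (C ε * (C ζ ^ 2 * X 1 - X 0)) = -(C ε * (C ζ * X 1 - X 0)) := by
    simp only [map_mul, map_sub, map_add, map_pow, hi0, hi1, hC]
    linear_combination (C ε * X 1) * s4' + (C ε * X 0) * m2'
  have B1 : jH (C ε * (X 1 - X 0)) = -(C ε * (C ζ ^ 2 * X 1 - X 0)) := by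
    simp only [map_mul, map_sub, map_add, map_pow, hj0, hj1, hC]
    linear_combination (-(C ε * X 1)) * m3' + (C ε * X 0) * m2'
  have B2 : jH (C ε * (C ζ * X 1 - X 0)) = -(X 0 : R9) := by
    simp only [map_mul, map_sub, map_add, map_pow, hj0, hj1, hC]
    linear_combination (X 0 : R9) * s3e' + (2 * C ε ^ 2 * (C ζ - 1) * X 0) * hζ'
  have B3 : jH (C ε * (C ζ ^ 2 * X 1 - X 0)) = C ε * (X 1 - X 0) := by
    simp only [map_mul, map_sub, map_add, map_pow, hj0, hj1, hC]
    linear_combination (C ε * X 1) * hε' + (C ε * X 0) * m1' +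
      (2 * C ε ^ 2 * C ζ * (C ζ - 1) * X 0) * hζ'
  have C1 : kH (C ε * (X 1 - X 0)) = C ε * (C ζ * X 1 - X 0) := by
    simp only [map_mul, map_sub, map_add, map_pow, hk0, hk1, hC]
    linear_combination (-(C ε * X 1)) * s4' + (C ε * X 0) * m1'
  have C2 : kH (C ε * (C ζ * X 1 - X 0)) = -(C ε * (X 1 - X 0)) := by
    simp only [map_mul, map_sub, map_add, map_pow, hk0, hk1, hC]
    linear_combination (-(C ε * X 1)) * hε' + (C ε * X 0) * m2'
  have C3 : kH (C ε * (C ζ ^ 2 * X 1 - X 0)) = -(X 0 : R9) := by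
    simp only [map_mul, map_sub, map_add, map_pow, hk0, hk1, hC]
    linear_combination (X 0 : R9) * s3e' + (2 * C ε ^ 2 * (C ζ - 1) * X 0) * hζ'
  refine ⟨?_, ?_, ?_⟩
  · rw [hi0, hj0, hk0, map_mul, map_mul, map_mul, hi0, A1, A2, A3]
    ring
  · rw [hi0, hj0, hk0, map_mul, map_mul, map_mul, hj0, B1, B2, B3]
    ring
  · rw [hi0, hj0, hk0, map_mul, map_mul, map_mul, hk0, C1, C2, C3]
    ring

end
end

section
/- With the Q8-action on W[v_1, u^{-1}] defined by the formulas i_*(v_1) = (v_1 + 2u^{-1})/(ζ²-ζ), j_*(v_1) = (v_1 + 2ζ²u^{-1})/(ζ²-ζ), k_*(v_1) = (v_1 + 2ζu^{-1})/(ζ²-ζ), the norm N_{C_2}^{Q8}(v_1) = v_1 · i_*(v_1) · j_*(v_1) · k_*(v_1) is congruent to v_1^4 modulo 2. In particular, the ideal J = (2, v_1^4) of W[v_1, u^{-1}] is Q8-invariant. -/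
noncomputable section

/-- The ring `W(𝔽₄)[v₁, u⁻¹]`: `X 0` is `u⁻¹` and `X 1` is `v₁`. -/
abbrev R10 : Type := MvPolynomial (Fin 2) W4

open MvPolynomial

/-- If an algebra endomorphism of `R10` sends `X 1` to `a * (X 1 + 2 * t)`, then the image of
the ideal `(2, X 1 ^ 4)` lands back in that ideal. -/
lemma ideal_map_helper (f : R10 →ₐ[W4] R10) (a t : R10) (h1 : f (X 1) = a * (X 1 + 2 * t)) :
    Ideal.map f.toRingHom (Ideal.span {(2 : R10), (X 1) ^ 4}) ≤
      Ideal.span {(2 : R10), (X 1) ^ 4} := by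
  rw [Ideal.map_span, Ideal.span_le]
  rintro x hx
  simp only [Set.image_insert_eq, Set.image_singleton, Set.mem_insert_iff,
    Set.mem_singleton_iff] at hx
  rcases hx with h | h
  · subst h
    have : (f.toRingHom : R10 → R10) 2 = 2 := map_ofNat _ 2
    rw [this]
    exact Ideal.subset_span (by simp)
  · subst h
    have hx4 : f.toRingHom ((X 1 : R10) ^ 4) =
        a ^ 4 * (4 * X 1 ^ 3 * t + 12 * X 1 ^ 2 * t ^ 2 + 16 * X 1 * t ^ 3 + 8 * t ^ 4) * 2
        + a ^ 4 * (X 1) ^ 4 := by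
      show f ((X 1 : R10) ^ 4) = _
      rw [map_pow, h1]; ring
    rw [hx4]
    exact Ideal.add_mem _ (Ideal.mul_mem_left _ _ (Ideal.subset_span (by simp)))
      (Ideal.mul_mem_left _ _ (Ideal.subset_span (by simp)))

/-- With the `Q₈`-action on `W(𝔽₄)[v₁, u⁻¹]` given by
`i(v₁) = (v₁ + 2u⁻¹)/(ζ²-ζ)`, `j(v₁) = (v₁ + 2ζ²u⁻¹)/(ζ²-ζ)`, `k(v₁) = (v₁ + 2ζu⁻¹)/(ζ²-ζ)`
(and the corresponding formulas on `u⁻¹`), the norm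
`N_{C₂}^{Q₈}(v₁) = v₁ · i(v₁) · j(v₁) · k(v₁)` is congruent to `v₁⁴` modulo `2`.
In particular, the ideal `J = (2, v₁⁴)` is `Q₈`-invariant. -/
theorem norm_v1_congruent_v1_pow_four
    (ζ ε : W4) (hζ : ζ ^ 2 + ζ + 1 = 0) (hε : (ζ ^ 2 - ζ) * ε = 1)
    (iH jH kH : R10 →ₐ[W4] R10)
    (hi0 : iH (X 0) = C ε * (X 1 - X 0))
    (hi1 : iH (X 1) = C ε * (X 1 + 2 * X 0))
    (hj0 : jH (X 0) = C ε * (C ζ * X 1 - X 0))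
    (hj1 : jH (X 1) = C ε * (X 1 + 2 * C (ζ ^ 2) * X 0))
    (hk0 : kH (X 0) = C ε * (C (ζ ^ 2) * X 1 - X 0))
    (hk1 : kH (X 1) = C ε * (X 1 + 2 * C ζ * X 0)) :
    (∃ r : R10, X 1 * iH (X 1) * jH (X 1) * kH (X 1) = (X 1) ^ 4 + 2 * r) ∧
    Ideal.map iH.toRingHom (Ideal.span {(2 : R10), (X 1) ^ 4}) ≤
      Ideal.span {(2 : R10), (X 1) ^ 4} ∧
    Ideal.map jH.toRingHom (Ideal.span {(2 : R10), (X 1) ^ 4}) ≤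
      Ideal.span {(2 : R10), (X 1) ^ 4} ∧
    Ideal.map kH.toRingHom (Ideal.span {(2 : R10), (X 1) ^ 4}) ≤
      Ideal.span {(2 : R10), (X 1) ^ 4} := by
  refine ⟨?_, ?_, ?_, ?_⟩
  · -- the norm congruence
    have h3 : ζ ^ 3 = 1 := by linear_combination (ζ - 1) * hζ
    have hcube : (ζ ^ 2 - ζ) ^ 3 = -3 - 6 * ζ ^ 2 := by
      linear_combination (ζ^3 - 3*ζ^2 + 3*ζ) * h3 + 3 * hζ
    have hE : ε ^ 3 = 1 + 2 * (ε ^ 3 * (2 + 3 * ζ ^ 2)) := by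
      linear_combination (-ε^3) * hcube + (((ζ^2-ζ)*ε)^2 + (ζ^2-ζ)*ε + 1) * hε
    have Hζ : (C ζ : R10) ^ 2 + C ζ + 1 = 0 := by
      have := congrArg (C : W4 →+* R10) hζ
      simpa using this
    have HE : (C ε : R10) ^ 3 = 1 + 2 * C (ε ^ 3 * (2 + 3 * ζ ^ 2)) := by
      have := congrArg (C : W4 →+* R10) hE
      rw [map_add, map_one, map_mul, map_ofNat, map_pow] at this; exact this
    have Hζ2 : (C (ζ ^ 2) : R10) = (C ζ) ^ 2 := map_pow _ _ _
    refine ⟨C (ε ^ 3 * (2 + 3 * ζ ^ 2)) * X 1 ^ 4 + 4 * (C ε) ^ 3 * X 1 * X 0 ^ 3, ?_⟩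
    rw [hi1, hj1, hk1, Hζ2]
    linear_combination ((C ε : R10)^3 * X 1 *
        (2 * X 0 * X 1^2 + 4 * C ζ * X 0^2 * X 1 + 8 * (C ζ - 1) * X 0^3)) * Hζ
      + (X 1 : R10)^4 * HE
  · exact ideal_map_helper iH (C ε) (X 0) (by rw [hi1])
  · exact ideal_map_helper jH (C ε) (C (ζ ^ 2) * X 0) (by rw [hj1]; ring)
  · exact ideal_map_helper kH (C ε) (C ζ * X 0) (by rw [hk1]; ring)

end
end

section
/- Let W be a ring with 2 a non-zero-divisor and let ζ ∈ W satisfy ζ² + ζ + 1 = 0. Consider the free W-module M = W{s², st, t²} with the linear operators given (in the basis s², st, t²) by i_*(s²) = t², i_*(st) = -st, i_*(t²) = s², j_*(s²) = -ζs² + 2st - ζ²t², j_*(st) = s² + (2ζ+1)st - t², j_*(t²) = -ζ²s² - 2st - ζt². Then the intersection ker(i_* - 1) ∩ ker(j_* - 1) equals the free rank-one W-submodule generated by s² + t². -/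
/-- Let `W` be a (commutative) ring in which `2` is a non-zero-divisor, with an element `ζ`
satisfying `ζ² + ζ + 1 = 0`.  On the free `W`-module `M = W{s², st, t²}` of rank 3
(coordinates indexed by the basis `s², st, t²`), consider the `W`-linear operators
`i_*` and `j_*` given by
`i_*(s²) = t²`, `i_*(st) = -st`, `i_*(t²) = s²`,
`j_*(s²) = -ζs² + 2st - ζ²t²`, `j_*(st) = s² + (2ζ+1)st - t²`, `j_*(t²) = -ζ²s² - 2st - ζt²`.
Then `ker(i_* - 1) ∩ ker(j_* - 1)` is the free rank-one submodule generated by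
`s² + t²` (the vector `![1,0,1]`). -/
theorem fixed_points_of_i_and_j
    {W : Type*} [CommRing W] (h2 : ∀ x : W, 2 * x = 0 → x = 0)
    (ζ : W) (hζ : ζ ^ 2 + ζ + 1 = 0) :
    (LinearMap.ker
        (Matrix.toLin' (!![0, 0, 1; 0, -1, 0; 1, 0, 0] : Matrix (Fin 3) (Fin 3) W) -
          LinearMap.id) ⊓
      LinearMap.ker
        (Matrix.toLin'
            (!![-ζ, 1, -(ζ ^ 2); 2, 2 * ζ + 1, -2; -(ζ ^ 2), -1, -ζ] :
              Matrix (Fin 3) (Fin 3) W) -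
          LinearMap.id)) =
      Submodule.span W {![1, 0, 1]} ∧
    Function.Injective (fun c : W => c • (![1, 0, 1] : Fin 3 → W)) := by
  constructor
  · ext x
    simp only [Submodule.mem_inf, LinearMap.mem_ker, LinearMap.sub_apply,
      Matrix.toLin'_apply, LinearMap.id_apply, sub_eq_zero,
      Submodule.mem_span_singleton]
    constructor
    · rintro ⟨hi, hj⟩
      have hi0 := congrFun hi 0
      have hi1 := congrFun hi 1
      simp [Matrix.mulVec, dotProduct, Fin.sum_univ_three] at hi0 hi1
      have hb : x 1 = 0 := by
        apply h2
        linear_combination -hi1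
      refine ⟨x 0, ?_⟩
      funext k
      fin_cases k <;> simp [hb, hi0]
    · rintro ⟨c, rfl⟩
      constructor <;> funext k <;> fin_cases k <;>
        simp [Matrix.mulVec, dotProduct, Fin.sum_univ_three] <;> ring_nf <;>
        linear_combination (-c) * hζ
  · intro a b h
    have := congrFun h 0
    simpa using this
end

section
/- With M = W{s², st, t²} and the operators i_*, j_* as in the preceding context, let d_3 : M → M be the 'sum over the group' map d_3 = Σ_{g ∈ Q8} g_* (where k = ij, and -1 acts as the identity on this even-degree module so each of 1, i, j, k contributes twice). Then d_3(s²) = 4(s² + t²), d_3(st) = 0, d_3(t²) = 4(s² + t²); hence the quotient of ker(i_*-1) ∩ ker(j_*-1) = W{s²+t²} by the image of d_3 is isomorphic to W/4. -/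
noncomputable section

set_option maxHeartbeats 4000000 in
/-- Let `ζ ∈ W = 𝕎(𝔽₄)` satisfy `ζ² + ζ + 1 = 0`, and let `i_*`, `j_*` be the operators on
`M = W{s², st, t²}` of the preceding setup (`i_*(s²) = t²`, `i_*(st) = -st`, `i_*(t²) = s²`;
`j_*(s²) = -ζs² + 2st - ζ²t²`, `j_*(st) = s² + (2ζ+1)st - t²`, `j_*(t²) = -ζ²s² - 2st - ζt²`),
with `k_* = i_* ∘ j_*`.  Let `d₃ = Σ_{g ∈ Q₈} g_* = 2(1 + i_* + j_* + k_*)` (the central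
`-1` acts trivially on this even-degree module, so each of `1, i, j, k` contributes twice).
Then `d₃(s²) = 4(s² + t²)`, `d₃(st) = 0`, `d₃(t²) = 4(s² + t²)`; hence the quotient of
`ker(i_* - 1) ∩ ker(j_* - 1) = W{s² + t²}` by the image of `d₃` is isomorphic to `W/4`.
(This establishes `H⁴(Q₈, π₄E₂ ⊗ σ_i) ≅ W/4`.) -/
theorem sum_over_group_map_and_quotient
    (ζ : W4) (hζ : ζ ^ 2 + ζ + 1 = 0)
    (iE jE N : (Fin 3 → W4) →ₗ[W4] (Fin 3 → W4))
    (hiE : iE = Matrix.toLin' (!![0, 0, 1; 0, -1, 0; 1, 0, 0] : Matrix (Fin 3) (Fin 3) W4))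
    (hjE : jE = Matrix.toLin'
      (!![-ζ, 1, -(ζ ^ 2); 2, 2 * ζ + 1, -2; -(ζ ^ 2), -1, -ζ] : Matrix (Fin 3) (Fin 3) W4))
    (hN : N = (2 : ℤ) • (LinearMap.id + iE + jE + iE ∘ₗ jE)) :
    N ![1, 0, 0] = ![4, 0, 4] ∧
    N ![0, 1, 0] = 0 ∧
    N ![0, 0, 1] = ![4, 0, 4] ∧
    Nonempty
      ((↥(LinearMap.ker (iE - LinearMap.id) ⊓ LinearMap.ker (jE - LinearMap.id)) ⧸
          Submodule.comap
            (LinearMap.ker (iE - LinearMap.id) ⊓ LinearMap.ker (jE - LinearMap.id)).subtype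
            (LinearMap.range N)) ≃ₗ[W4]
        W4 ⧸ Ideal.span {(4 : W4)}) := by
  have h1 : N ![1, 0, 0] = ![4, 0, 4] ∧ N ![0, 1, 0] = 0 ∧ N ![0, 0, 1] = ![4, 0, 4] := by
    subst hiE hjE hN
    refine ⟨?_, ?_, ?_⟩ <;> funext i <;> fin_cases i <;>
      simp [Matrix.toLin'_apply, Matrix.mulVec, dotProduct, Fin.sum_univ_three,
        Matrix.vecHead, Matrix.vecTail, Function.comp, Pi.mul_apply] <;>
      first
        | linear_combination (4:W4) * hζ
        | linear_combination (6:W4) * hζ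
        | linear_combination (2:W4) * hζ
        | linear_combination (-4:W4) * hζ
        | linear_combination (-6:W4) * hζ
        | linear_combination (-2:W4) * hζ
        | ring
  obtain ⟨hN1, hN2, hN3⟩ := h1
  refine ⟨hN1, hN2, hN3, ?_⟩
  set K : Submodule W4 (Fin 3 → W4) :=
    LinearMap.ker (iE - LinearMap.id) ⊓ LinearMap.ker (jE - LinearMap.id) with hK
  -- decomposition of a vector
  have hdec : ∀ y : Fin 3 → W4,
      y = y 0 • ![1,0,0] + y 1 • ![0,1,0] + y 2 • ![0,0,1] := by
    intro y; funext i; fin_cases i <;> simp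
  -- formula for N
  have hNy : ∀ y : Fin 3 → W4, N y = (y 0 + y 2) • ![4, 0, 4] := by
    intro y
    conv_lhs => rw [hdec y]
    rw [map_add, map_add, map_smul, map_smul, map_smul, hN1, hN2, hN3, smul_zero]
    rw [add_zero, ← add_smul]
  -- membership in K
  have hmem : ∀ x : Fin 3 → W4, x ∈ K ↔ x 1 = 0 ∧ x 2 = x 0 := by
    intro x
    constructor
    · intro hx
      rw [hK, Submodule.mem_inf] at hx
      obtain ⟨hxi, hxj⟩ := hx
      rw [LinearMap.mem_ker] at hxi hxj
      have ei0 := congrFun hxi 0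
      have ej0 := congrFun hxj 0
      subst hiE hjE
      simp [Matrix.toLin'_apply, Matrix.mulVec, dotProduct, Fin.sum_univ_three,
        Matrix.vecHead, Matrix.vecTail] at ei0 ej0
      have h2 : x 2 = x 0 := by linear_combination ei0
      refine ⟨?_, h2⟩
      linear_combination ej0 + (ζ ^ 2) * ei0 + (x 0) * hζ
    · rintro ⟨hx1, hx2⟩
      subst hiE hjE
      rw [hK, Submodule.mem_inf]
      constructor <;>
        · rw [LinearMap.mem_ker]; funext i; fin_cases i <;>
            simp [Matrix.toLin'_apply, Matrix.mulVec, dotProduct, Fin.sum_univ_three,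
              Matrix.vecHead, Matrix.vecTail, hx1, hx2] <;>
            linear_combination (- x 0) * hζ
  -- the linear map K → W4 given by evaluation at 0
  set f : ↥K →ₗ[W4] W4 := (LinearMap.proj 0).comp K.subtype with hf
  have hfb : Function.Bijective f := by
    constructor
    · rintro ⟨x, hx⟩ ⟨y, hy⟩ hxy
      obtain ⟨hx1, hx2⟩ := (hmem x).1 hx
      obtain ⟨hy1, hy2⟩ := (hmem y).1 hy
      simp only [hf, LinearMap.comp_apply, Submodule.subtype_apply, LinearMap.proj_apply] at hxy
      apply Subtype.ext
      funext i
      fin_cases i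
      · exact hxy
      · show x 1 = y 1; rw [hx1, hy1]
      · show x 2 = y 2; rw [hx2, hy2, hxy]
    · intro a
      refine ⟨⟨![a, 0, a], (hmem _).2 ⟨rfl, rfl⟩⟩, rfl⟩
  set e : ↥K ≃ₗ[W4] W4 := LinearEquiv.ofBijective f hfb with he
  have hmap : (Submodule.comap K.subtype (LinearMap.range N)).map (e : ↥K →ₗ[W4] W4)
      = Ideal.span {(4 : W4)} := by
    ext a
    simp only [Submodule.mem_map, Submodule.mem_comap, LinearMap.mem_range,
      Ideal.mem_span_singleton]
    constructor
    · rintro ⟨⟨x, hxK⟩, ⟨y, hy⟩, rfl⟩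
      simp only [Submodule.subtype_apply] at hy
      have : x 0 = 4 * (y 0 + y 2) := by
        rw [← hy, hNy y]; simp [mul_comm]
      refine ⟨y 0 + y 2, ?_⟩
      simpa [he, hf, LinearEquiv.ofBijective_apply] using this
    · rintro ⟨c, rfl⟩
      refine ⟨⟨![4 * c, 0, 4 * c], (hmem _).2 ⟨rfl, rfl⟩⟩, ⟨![c, 0, 0], ?_⟩, ?_⟩
      · simp only [Submodule.subtype_apply]
        rw [hNy]
        funext i; fin_cases i <;> simp [mul_comm]
      · simp [he, hf, LinearEquiv.ofBijective_apply]
  exact ⟨Submodule.Quotient.equiv _ _ e hmap⟩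

end
end
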